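/- There exists an absolute constant c₀ > 0 with the following property. Let s ≥ 2 be an integer, let ξ ∈ ℤ ∖ {0} with base-s digits d_j(|ξ|), and suppose j ≥ 1 is an index such that 1 ≤ d_{j−1}(|ξ|) + d_j(|ξ|)·s ≤ s² − 2. Then for every digit set 𝒜 ⊆ {0,1,…,s−1} with {0,1} ⊆ 𝒜 and r := #𝒜, one has |g(ξ, j+1; s, 𝒜)| ≤ 1 − c₀/(r s⁴) < 1. -/

import Mathlib

open Finset

/-- `e(y) = exp(-2πi y)`. -/
noncomputable def eneg (y : ℝ) : ℂ := Complex.exp (-(2 * Real.pi * Complex.I * (y : ℂ)))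

/-- `1̂(θ) = ∫₀¹ e(xθ) dx`. -/
noncomputable def oneHat (θ : ℝ) : ℂ := ∫ x in (0:ℝ)..1, eneg (x * θ)

/-- The `j`-th base-`s` digit of the natural number `n`. -/
def digitOf (s n j : ℕ) : ℕ := n / s ^ j % s

/-- `𝔄(ξ; N, s, a) = N⁻¹ Σ_{k<N} e(ξ k s^{-a})`. -/
noncomputable def Afun (N s a : ℕ) (ξ : ℤ) : ℂ :=
  (N : ℂ)⁻¹ * ∑ k ∈ Finset.range N, eneg ((ξ : ℝ) * k / (s : ℝ) ^ a)

/-- `ℭ(ξ) = s^{a-b} Σ_{ℓ < s^{b-a}} e(ξ ℓ s^{-b})`. -/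
noncomputable def Cfun (s a b : ℕ) (ξ : ℤ) : ℂ :=
  (((s : ℝ) ^ a / (s : ℝ) ^ b : ℝ) : ℂ) *
    ∑ ℓ ∈ Finset.range (s ^ (b - a)), eneg ((ξ : ℝ) * ℓ / (s : ℝ) ^ b)

/-- `𝕃*`: the set of `ℓ < s^{b-a}` all of whose `b-a` base-`s` digits lie in `D`. -/
def Lstar (s a b : ℕ) (D : Finset ℕ) : Finset ℕ :=
  (Finset.range (s ^ (b - a))).filter fun ℓ => ∀ j < b - a, digitOf s ℓ j ∈ D

/-- `𝔅*(ξ) = r^{a-b} Σ_{ℓ ∈ 𝕃*} e(ξ ℓ s^{-b})`, where `r = #D`. -/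
noncomputable def Bstar (s a b : ℕ) (D : Finset ℕ) (ξ : ℤ) : ℂ :=
  (((D.card : ℝ) ^ a / (D.card : ℝ) ^ b : ℝ) : ℂ) *
    ∑ ℓ ∈ Lstar s a b D, eneg ((ξ : ℝ) * ℓ / (s : ℝ) ^ b)

/-- `g(ξ, k; s, 𝒜) = (#𝒜)⁻¹ Σ_{d ∈ 𝒜} e(ξ d s^{-k})`. -/
noncomputable def gfun (s : ℕ) (A : Finset ℕ) (ξ : ℤ) (k : ℕ) : ℂ :=
  (A.card : ℂ)⁻¹ * ∑ d ∈ A, eneg ((ξ : ℝ) * d / (s : ℝ) ^ k)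

lemma eneg_eq (y : ℝ) :
    eneg y = Complex.exp (((-(2 * Real.pi * y) : ℝ) : ℂ) * Complex.I) := by
  unfold eneg; congr 1; push_cast; ring

lemma eneg_norm (y : ℝ) : ‖eneg y‖ = 1 := by
  rw [eneg_eq, Complex.norm_exp_ofReal_mul_I]

lemma eneg_zero : eneg 0 = 1 := by
  simp [eneg]

lemma norm_one_add_eneg_sq (y : ℝ) :
    ‖1 + eneg y‖ ^ 2 = 2 + 2 * Real.cos (2 * Real.pi * y) := by
  rw [eneg_eq, Complex.exp_mul_I]
  set x : ℝ := -(2 * Real.pi * y) with hx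
  have h1 : (1 : ℂ) + (Complex.cos x + Complex.sin x * Complex.I)
      = ((1 + Real.cos x : ℝ) : ℂ) + ((Real.sin x : ℝ) : ℂ) * Complex.I := by
    push_cast [Complex.ofReal_cos, Complex.ofReal_sin]
    ring
  rw [h1, Complex.sq_norm, Complex.normSq_add_mul_I]
  have h2 := Real.sin_sq_add_cos_sq x
  have h3 : Real.cos x = Real.cos (2 * Real.pi * y) := by
    rw [hx, Real.cos_neg]
  nlinarith [h2, h3]

lemma cos_two_pi_bound {ε f : ℝ} (hε0 : 0 < ε) (hε : ε ≤ 1 / 2)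
    (h1 : ε ≤ f) (h2 : f ≤ 1 - ε) :
    Real.cos (2 * Real.pi * f) ≤ 1 - 8 * ε ^ 2 := by
  have hπ := Real.pi_pos
  have key : ∀ g : ℝ, ε ≤ g → g ≤ 1 / 2 →
      Real.cos (2 * Real.pi * g) ≤ 1 - 8 * ε ^ 2 := by
    intro g hg1 hg2
    have h3 : Real.cos (2 * Real.pi * g) ≤ Real.cos (2 * Real.pi * ε) :=
      Real.cos_le_cos_of_nonneg_of_le_pi (by positivity) (by nlinarith) (by nlinarith)
    have h4 : Real.cos (2 * Real.pi * ε) = 1 - 2 * Real.sin (Real.pi * ε) ^ 2 := by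
      have hc := Real.cos_two_mul' (Real.pi * ε)
      have hsc := Real.sin_sq_add_cos_sq (Real.pi * ε)
      have : 2 * Real.pi * ε = 2 * (Real.pi * ε) := by ring
      rw [this, hc]; linarith
    have h6 : 2 * ε ≤ Real.sin (Real.pi * ε) := by
      have hj := Real.mul_le_sin (x := Real.pi * ε) (by positivity) (by nlinarith)
      have : 2 / Real.pi * (Real.pi * ε) = 2 * ε := by field_simp
      linarith [this ▸ hj]
    nlinarith [h6, hε0]
  rcases le_or_gt f (1 / 2) with h | h
  · exact key f h1 h
  · have e1 : 2 * Real.pi * (1 - f) = -(2 * Real.pi * f) + (1 : ℤ) * (2 * Real.pi) := by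
      push_cast; ring
    have e2 : Real.cos (2 * Real.pi * (1 - f)) = Real.cos (2 * Real.pi * f) := by
      rw [e1, Real.cos_add_int_mul_two_pi, Real.cos_neg]
    rw [← e2]
    exact key (1 - f) (by linarith) (by linarith)

lemma digit_rem_bound {s n j : ℕ} (hs : 2 ≤ s) (hj : 1 ≤ j)
    (hm1 : 1 ≤ digitOf s n (j - 1) + digitOf s n j * s)
    (hm2 : digitOf s n (j - 1) + digitOf s n j * s ≤ s ^ 2 - 2) :
    s ^ (j - 1) ≤ n % s ^ (j + 1) ∧ n % s ^ (j + 1) + s ^ (j - 1) ≤ s ^ (j + 1) := by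
  set a := s ^ (j - 1) with ha
  have ha0 : 0 < a := Nat.pow_pos (by omega)
  have hP : s ^ (j + 1) = a * s ^ 2 := by
    rw [ha, ← pow_add]
    congr 1
    omega
  -- the two-digit block m
  set m := n / a % s ^ 2 with hm
  have hsj : s ^ j = a * s := by
    rw [ha, ← pow_succ]
    congr 1
    omega
  have hdig : m = digitOf s n (j - 1) + digitOf s n j * s := by
    have hs2 : s ^ 2 = s * s := sq s
    have e1 : n / a % (s * s) % s = n / a % s := Nat.mod_mod_of_dvd _ ⟨s, rfl⟩
    have e2 : n / a % (s * s) / s = n / a / s % s := Nat.mod_mul_right_div_self (n / a) s s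
    have e3 : n / s ^ j = n / a / s := by rw [hsj, Nat.div_div_eq_div_mul]
    have e4 := Nat.div_add_mod (n / a % (s * s)) s
    rw [e1, e2] at e4
    unfold digitOf
    rw [e3, ← ha, hm, hs2, ← e4]
    ring
  rw [← hdig] at hm1 hm2
  -- decompose n % s^(j+1)
  set R := n % s ^ (j + 1) with hR
  have hRa : R % a = n % a := by
    rw [hR, hP]
    exact Nat.mod_mod_of_dvd _ ⟨s ^ 2, rfl⟩
  have hRd : R / a = m := by
    rw [hR, hP, hm]
    exact Nat.mod_mul_right_div_self n a (s ^ 2)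
  have hdec : R = a * m + n % a := by
    have := Nat.div_add_mod R a
    rw [hRd, hRa] at this
    omega
  have hna : n % a < a := Nat.mod_lt _ ha0
  have hB : 2 ≤ s ^ 2 := by nlinarith
  have h1 : a ≤ a * m := Nat.le_mul_of_pos_right a (by omega)
  have h2 : a * m + 2 * a ≤ a * s ^ 2 := by
    have hmle : a * m ≤ a * (s ^ 2 - 2) := Nat.mul_le_mul_left a hm2
    have e : a * (s ^ 2 - 2) + a * 2 = a * s ^ 2 := by
      rw [← Nat.mul_add, Nat.sub_add_cancel hB]
    calc a * m + 2 * a ≤ a * (s ^ 2 - 2) + 2 * a := Nat.add_le_add_right hmle _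
      _ = a * (s ^ 2 - 2) + a * 2 := by ring
      _ = a * s ^ 2 := e
  obtain ⟨c, hc, hdec'⟩ : ∃ c, c < a ∧ R = a * m + c := ⟨n % a, hna, hdec⟩
  constructor
  · rw [hdec']; exact le_trans h1 (Nat.le_add_right _ _)
  · rw [hP, hdec']
    have t1 : c + a ≤ 2 * a := by omega
    calc a * m + c + a = a * m + (c + a) := by ring
      _ ≤ a * m + 2 * a := Nat.add_le_add_left t1 _
      _ ≤ a * s ^ 2 := h2

set_option maxHeartbeats 1000000 in
/-- Lemma 11.1(a) (Pramanik–Zhang): there is an absolute constant `c₀ > 0` such that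
if the pair of adjacent base-`s` digits of `|ξ|` at positions `j−1, j` is not
extremal (i.e. `1 ≤ d_{j−1} + d_j s ≤ s² − 2`), then for any digit set `𝒜`
containing `0` and `1`, `|g(ξ, j+1; s, 𝒜)| ≤ 1 − c₀/(r s⁴) < 1`. -/
theorem gfun_nontrivial_bound :
    ∃ c₀ : ℝ, 0 < c₀ ∧
      ∀ s : ℕ, 2 ≤ s → ∀ ξ : ℤ, ξ ≠ 0 → ∀ j : ℕ, 1 ≤ j →
        1 ≤ digitOf s ξ.natAbs (j - 1) + digitOf s ξ.natAbs j * s →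
        digitOf s ξ.natAbs (j - 1) + digitOf s ξ.natAbs j * s ≤ s ^ 2 - 2 →
        ∀ A : Finset ℕ, A ⊆ Finset.range s → 0 ∈ A → 1 ∈ A →
          ‖gfun s A ξ (j + 1)‖ ≤ 1 - c₀ / (A.card * (s : ℝ) ^ 4) ∧
            1 - c₀ / (A.card * (s : ℝ) ^ 4) < 1 := by
  refine ⟨4, by norm_num, ?_⟩
  intro s hs ξ hξ j hj hm1 hm2 A hA h0 h1
  have hsR : (2 : ℝ) ≤ (s : ℝ) := by exact_mod_cast hs
  have hs0 : (0 : ℝ) < s := by linarith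
  have hr2 : 2 ≤ A.card := by
    have : ({0, 1} : Finset ℕ) ⊆ A := by
      intro x hx
      simp only [Finset.mem_insert, Finset.mem_singleton] at hx
      rcases hx with rfl | rfl <;> assumption
    calc 2 = ({0, 1} : Finset ℕ).card := by decide
      _ ≤ A.card := Finset.card_le_card this
  have hrR : (2 : ℝ) ≤ (A.card : ℝ) := by exact_mod_cast hr2
  have hs4 : (16 : ℝ) ≤ (s : ℝ) ^ 4 := by
    have := pow_le_pow_left₀ (by norm_num : (0:ℝ) ≤ 2) hsR 4
    norm_num at this
    linarith
  set n := ξ.natAbs with hn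
  set k := j + 1 with hk
  obtain ⟨hrem1, hrem2⟩ := digit_rem_bound hs hj hm1 hm2 (n := n)
  set P := s ^ (j + 1) with hP
  have hP0 : (0 : ℝ) < (P : ℝ) := by
    have : 0 < P := Nat.pow_pos (by omega)
    exact_mod_cast this
  -- the fractional value f = (n % P)/P
  set R := n % P with hR
  set f : ℝ := (R : ℝ) / (P : ℝ) with hf
  clear_value n k P R f
  have hPsplit : (P : ℝ) = (s : ℝ) ^ (j - 1) * (s : ℝ) ^ 2 := by
    rw [hP]
    push_cast
    rw [← pow_add]
    congr 1
    omega
  have hεf : 1 / (s : ℝ) ^ 2 ≤ f := by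
    rw [hf, div_le_div_iff₀ (by positivity) hP0, hPsplit]
    have h5 : ((s : ℝ) ^ (j - 1)) ≤ (R : ℝ) := by
      have h6 : ((s ^ (j - 1) : ℕ) : ℝ) ≤ (R : ℝ) := by exact_mod_cast hrem1
      push_cast at h6 ⊢
      linarith
    have h7 := mul_le_mul_of_nonneg_right h5 (by positivity : (0:ℝ) ≤ (s : ℝ) ^ 2)
    linarith
  have hfε : f ≤ 1 - 1 / (s : ℝ) ^ 2 := by
    have hcast : (R : ℝ) + (s : ℝ) ^ (j - 1) ≤ (P : ℝ) := by
      have := hrem2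
      have : ((R + s ^ (j - 1) : ℕ) : ℝ) ≤ ((P : ℕ) : ℝ) := by exact_mod_cast this
      push_cast at this
      linarith
    rw [hf, div_le_iff₀ hP0]
    have hpow : (1 - 1 / (s : ℝ) ^ 2) * (P : ℝ) = (P : ℝ) - (s : ℝ) ^ (j - 1) := by
      rw [hPsplit]
      field_simp
    rw [hpow]
    linarith
  -- the cosine bound
  have hε12 : (1 : ℝ) / (s : ℝ) ^ 2 ≤ 1 / 2 := by
    rw [div_le_div_iff₀ (by positivity) (by norm_num)]
    nlinarith
  have hcosf : Real.cos (2 * Real.pi * f) ≤ 1 - 8 * (1 / (s : ℝ) ^ 2) ^ 2 :=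
    cos_two_pi_bound (by positivity) hε12 hεf hfε
  have hε4 : (1 / (s : ℝ) ^ 2) ^ 2 = 1 / (s : ℝ) ^ 4 := by
    rw [div_pow, one_pow, ← pow_mul]
  -- relate cos(2π ξ/P) to cos(2π f)
  have hPs : (P : ℝ) = (s : ℝ) ^ k := by rw [hP, hk]; push_cast; ring
  have hξcast : (ξ : ℝ) = (n : ℝ) ∨ (ξ : ℝ) = -(n : ℝ) := by
    have habs : ((ξ.natAbs : ℕ) : ℝ) = |(ξ : ℝ)| := by
      rw [Nat.cast_natAbs]
      exact Int.cast_abs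
    rcases Int.natAbs_eq ξ with h | h
    · left; rw [hn, habs]
      conv_lhs => rw [h]
      push_cast
      ring
    · right; rw [hn, habs]
      conv_lhs => rw [h]
      push_cast
      ring
  have hcos1 : Real.cos (2 * Real.pi * ((ξ : ℝ) * (1 : ℕ) / (s : ℝ) ^ k))
      = Real.cos (2 * Real.pi * ((n : ℝ) / (P : ℝ))) := by
    rcases hξcast with h | h
    · congr 1
      rw [h, hPs]
      push_cast
      ring
    · rw [show 2 * Real.pi * ((ξ : ℝ) * (1 : ℕ) / (s : ℝ) ^ k)
          = -(2 * Real.pi * ((n : ℝ) / (P : ℝ))) from by rw [h, hPs]; push_cast; ring,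
        Real.cos_neg]
  set q : ℕ := n / P with hq
  clear_value q
  have hnsplit : (n : ℝ) = (P : ℝ) * (q : ℝ) + (R : ℝ) := by
    have hd := Nat.div_add_mod n P
    have h2 : ((P * q + n % P : ℕ) : ℝ) = (n : ℝ) := by rw [hq, hd]
    push_cast at h2
    rw [hR]
    push_cast
    linarith
  have hcos2 : Real.cos (2 * Real.pi * ((n : ℝ) / (P : ℝ)))
      = Real.cos (2 * Real.pi * f) := by
    have harg : 2 * Real.pi * ((n : ℝ) / (P : ℝ))
        = 2 * Real.pi * f + ((q : ℕ) : ℤ) * (2 * Real.pi) := by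
      rw [hf, hnsplit]
      push_cast
      field_simp
      ring
    rw [harg, Real.cos_add_int_mul_two_pi]
  -- norm of 1 + eneg(ξ/s^k)
  have hkey : ‖(1 : ℂ) + eneg ((ξ : ℝ) * (1 : ℕ) / (s : ℝ) ^ k)‖ ≤ 2 - 4 / (s : ℝ) ^ 4 := by
    have hsq := norm_one_add_eneg_sq ((ξ : ℝ) * (1 : ℕ) / (s : ℝ) ^ k)
    rw [hcos1, hcos2] at hsq
    have hb : ‖(1 : ℂ) + eneg ((ξ : ℝ) * (1 : ℕ) / (s : ℝ) ^ k)‖ ^ 2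
        ≤ 4 - 16 / (s : ℝ) ^ 4 := by
      rw [hsq]
      rw [hε4] at hcosf
      have h9 : (4 : ℝ) - 16 / (s : ℝ) ^ 4 = 2 + 2 * (1 - 8 * (1 / (s : ℝ) ^ 4)) := by ring
      rw [h9]
      linarith [hcosf]
    have hnn : (0 : ℝ) ≤ ‖(1 : ℂ) + eneg ((ξ : ℝ) * (1 : ℕ) / (s : ℝ) ^ k)‖ :=
      norm_nonneg _
    have hc0 : (0 : ℝ) ≤ 2 - 4 / (s : ℝ) ^ 4 := by
      rw [sub_nonneg, div_le_iff₀ (by positivity)]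
      linarith
    have hcsq : 4 - 16 / (s : ℝ) ^ 4 ≤ (2 - 4 / (s : ℝ) ^ 4) ^ 2 := by
      have e : (2 - 4 / (s : ℝ) ^ 4) ^ 2
          = 4 - 16 / (s : ℝ) ^ 4 + (4 / (s : ℝ) ^ 4) ^ 2 := by ring
      rw [e]
      linarith [sq_nonneg (4 / (s : ℝ) ^ 4)]
    calc ‖(1 : ℂ) + eneg ((ξ : ℝ) * (1 : ℕ) / (s : ℝ) ^ k)‖
        = Real.sqrt (‖(1 : ℂ) + eneg ((ξ : ℝ) * (1 : ℕ) / (s : ℝ) ^ k)‖ ^ 2) :=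
          (Real.sqrt_sq hnn).symm
      _ ≤ Real.sqrt ((2 - 4 / (s : ℝ) ^ 4) ^ 2) := Real.sqrt_le_sqrt (le_trans hb hcsq)
      _ = 2 - 4 / (s : ℝ) ^ 4 := Real.sqrt_sq hc0
  -- split the sum
  set φ : ℕ → ℂ := fun d => eneg ((ξ : ℝ) * d / (s : ℝ) ^ k) with hφ
  have h01 : (1 : ℕ) ∈ A.erase 0 := Finset.mem_erase.mpr ⟨one_ne_zero, h1⟩
  have e1 : ∑ d ∈ A, φ d = φ 0 + ∑ d ∈ A.erase 0, φ d :=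
    (Finset.add_sum_erase A φ h0).symm
  have e2 : ∑ d ∈ A.erase 0, φ d = φ 1 + ∑ d ∈ (A.erase 0).erase 1, φ d :=
    (Finset.add_sum_erase _ φ h01).symm
  have hφ0 : φ 0 = 1 := by
    rw [hφ]
    simp [eneg_zero]
  have hcard : (((A.erase 0).erase 1).card : ℝ) = (A.card : ℝ) - 2 := by
    rw [Finset.card_erase_of_mem h01, Finset.card_erase_of_mem h0]
    have : 2 ≤ A.card := hr2
    push_cast [Nat.cast_sub (by omega : 1 ≤ A.card - 1), Nat.cast_sub (by omega : 1 ≤ A.card)]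
    ring
  have hsum : ‖∑ d ∈ A, φ d‖ ≤ (A.card : ℝ) - 4 / (s : ℝ) ^ 4 := by
    rw [e1, e2, ← add_assoc, hφ0]
    calc ‖(1 + φ 1) + ∑ d ∈ (A.erase 0).erase 1, φ d‖
        ≤ ‖(1 : ℂ) + φ 1‖ + ‖∑ d ∈ (A.erase 0).erase 1, φ d‖ := norm_add_le _ _
      _ ≤ (2 - 4 / (s : ℝ) ^ 4) + ((A.card : ℝ) - 2) := by
          refine add_le_add hkey ?_
          calc ‖∑ d ∈ (A.erase 0).erase 1, φ d‖
              ≤ ∑ d ∈ (A.erase 0).erase 1, ‖φ d‖ := norm_sum_le _ _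
            _ = ∑ d ∈ (A.erase 0).erase 1, (1 : ℝ) := by
                refine Finset.sum_congr rfl fun d _ => ?_
                rw [hφ]
                exact eneg_norm _
            _ = (A.card : ℝ) - 2 := by rw [Finset.sum_const, nsmul_eq_mul, mul_one, hcard]
      _ = (A.card : ℝ) - 4 / (s : ℝ) ^ 4 := by ring
  have hrC : ‖((A.card : ℂ))⁻¹‖ = ((A.card : ℝ))⁻¹ := by
    rw [norm_inv]
    congr 1
    rw [Complex.norm_natCast]
  have hmain : ‖gfun s A ξ k‖ ≤ 1 - 4 / ((A.card : ℝ) * (s : ℝ) ^ 4) := by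
    unfold gfun
    rw [norm_mul, hrC]
    have hrpos : (0 : ℝ) < (A.card : ℝ) := by linarith
    have hrne : ((A.card : ℝ)) ≠ 0 := ne_of_gt hrpos
    have hsne : ((s : ℝ)) ≠ 0 := ne_of_gt hs0
    calc ((A.card : ℝ))⁻¹ * ‖∑ d ∈ A, φ d‖
        ≤ ((A.card : ℝ))⁻¹ * ((A.card : ℝ) - 4 / (s : ℝ) ^ 4) :=
          mul_le_mul_of_nonneg_left hsum (by positivity)
      _ = 1 - 4 / ((A.card : ℝ) * (s : ℝ) ^ 4) := by
          field_simp
  constructor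
  · exact hmain
  · have : (0 : ℝ) < 4 / ((A.card : ℝ) * (s : ℝ) ^ 4) := by positivity
    linarith
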